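/- Let β > 1 be real, let 0 < γ_j^{(2)} ≤ 1 for all j, and let t ∈ ℕ. Then for all l, m ∈ ℤ^t one has r_{β,γ^{(2)}}(l + m) · r_{β,γ^{(2)}}(l) ≤ (∏_{j=1}^{t} max(1, 2^β γ_j^{(2)})) · r_{β,γ^{(2)}}(m); equivalently, r_{β,γ^{(2)}}(l+m)/r_{β,γ^{(2)}}(m) ≤ (1/r_{β,γ^{(2)}}(l)) · ∏_{j=1}^{t} max(1, 2^β γ_j^{(2)}). -/
import Mathlib


open scoped BigOperators

/-- The Korobov-space decay function r_{β,γ} : ℤ → ℝ,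
    r_{β,γ}(0) = 1 and r_{β,γ}(l) = γ·|l|^{-β} for l ≠ 0. -/
noncomputable def rK (β γ : ℝ) (l : ℤ) : ℝ :=
  if l = 0 then 1 else γ * |(l : ℝ)| ^ (-β)

lemma rK_pos (β γ : ℝ) (hγ : 0 < γ) (l : ℤ) : 0 < rK β γ l := by
  unfold rK
  split
  · norm_num
  · have : (0:ℝ) < |(l:ℝ)| := by
      have : l ≠ 0 := by assumption
      positivity
    positivity

lemma rK_le_one (β γ : ℝ) (hβ : 0 < β) (hγ0 : 0 < γ) (hγ1 : γ ≤ 1) (l : ℤ) :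
    rK β γ l ≤ 1 := by
  unfold rK
  split
  · exact le_rfl
  · rename_i h
    have h1 : (1:ℝ) ≤ |(l:ℝ)| := by
      have := Int.one_le_abs (by omega : l ≠ 0)
      calc (1:ℝ) = ((1:ℤ):ℝ) := by norm_num
        _ ≤ ((|l|:ℤ):ℝ) := by exact_mod_cast this
        _ = |(l:ℝ)| := by push_cast; rfl
    have h2 : |(l:ℝ)| ^ (-β) ≤ 1 := by
      rw [Real.rpow_neg (by linarith)]
      have : (1:ℝ) ≤ |(l:ℝ)| ^ β := Real.one_le_rpow h1 hβ.le
      exact inv_le_one_of_one_le₀ this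
    calc γ * |(l:ℝ)| ^ (-β) ≤ 1 * 1 := by
          apply mul_le_mul hγ1 h2 (by positivity) (by norm_num)
      _ = 1 := by norm_num

lemma key (β : ℝ) (hβ : 1 < β) (γ : ℝ) (hγ0 : 0 < γ) (hγ1 : γ ≤ 1) (l m : ℤ) :
    rK β γ (l + m) * rK β γ l ≤ max 1 ((2:ℝ)^β * γ) * rK β γ m := by
  have hβ0 : (0:ℝ) < β := by linarith
  have hmax1 : (1:ℝ) ≤ max 1 ((2:ℝ)^β * γ) := le_max_left _ _
  have hmax2 : (2:ℝ)^β * γ ≤ max 1 ((2:ℝ)^β * γ) := le_max_right _ _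
  by_cases hl : l = 0
  · subst hl
    simp only [zero_add]
    have h1 : rK β γ m * rK β γ 0 = rK β γ m := by simp [rK]
    rw [h1]
    calc rK β γ m = 1 * rK β γ m := by ring
      _ ≤ max 1 ((2:ℝ)^β * γ) * rK β γ m := by
          apply mul_le_mul_of_nonneg_right hmax1 (rK_pos β γ hγ0 m).le
  by_cases hm : m = 0
  · subst hm
    simp only [add_zero]
    have h0 : rK β γ 0 = 1 := by simp [rK]
    rw [h0]
    have h1 := rK_le_one β γ hβ0 hγ0 hγ1 l
    have h2 := (rK_pos β γ hγ0 l).le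
    nlinarith [rK_le_one β γ hβ0 hγ0 hγ1 l]
  by_cases hlm : l + m = 0
  · have hrlm : rK β γ (l+m) = 1 := by simp [rK, hlm]
    have habs : |(l:ℝ)| = |(m:ℝ)| := by
      have : (l:ℝ) = -(m:ℝ) := by
        have : l = -m := by omega
        exact_mod_cast this
      rw [this, abs_neg]
    have hrl : rK β γ l = rK β γ m := by simp [rK, hl, hm, habs]
    rw [hrlm, hrl, one_mul]
    exact le_mul_of_one_le_left (rK_pos β γ hγ0 m).le hmax1
  · -- all nonzero
    set a := |((l+m : ℤ):ℝ)| with ha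
    set b := |(l:ℝ)| with hb
    set c := |(m:ℝ)| with hc
    have ha1 : (1:ℝ) ≤ a := by
      have := Int.one_le_abs hlm
      rw [ha]
      calc (1:ℝ) = ((1:ℤ):ℝ) := by norm_num
        _ ≤ ((|l+m|:ℤ):ℝ) := by exact_mod_cast this
        _ = |((l+m:ℤ):ℝ)| := by push_cast; rfl
    have hb1 : (1:ℝ) ≤ b := by
      have := Int.one_le_abs hl
      rw [hb]
      calc (1:ℝ) = ((1:ℤ):ℝ) := by norm_num
        _ ≤ ((|l|:ℤ):ℝ) := by exact_mod_cast this
        _ = |(l:ℝ)| := by push_cast; rfl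
    have hc1 : (1:ℝ) ≤ c := by
      have := Int.one_le_abs hm
      rw [hc]
      calc (1:ℝ) = ((1:ℤ):ℝ) := by norm_num
        _ ≤ ((|m|:ℤ):ℝ) := by exact_mod_cast this
        _ = |(m:ℝ)| := by push_cast; rfl
    have hcab : c ≤ 2 * a * b := by
      have h1 : c ≤ a + b := by
        rw [ha, hb, hc]
        have : (m:ℝ) = ((l+m:ℤ):ℝ) + (-(l:ℝ)) := by push_cast; ring
        calc |(m:ℝ)| = |((l+m:ℤ):ℝ) + (-(l:ℝ))| := by rw [← this]
          _ ≤ |((l+m:ℤ):ℝ)| + |(-(l:ℝ))| := abs_add_le _ _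
          _ = |((l+m:ℤ):ℝ)| + |(l:ℝ)| := by rw [abs_neg]
      nlinarith
    have hcpow : c ^ β ≤ 2 ^ β * a ^ β * b ^ β := by
      calc c ^ β ≤ (2 * a * b) ^ β :=
            Real.rpow_le_rpow (by linarith) hcab hβ0.le
        _ = 2 ^ β * a ^ β * b ^ β := by
            rw [Real.mul_rpow (by positivity) (by positivity),
                Real.mul_rpow (by norm_num) (by positivity)]
    have hgoal : γ * a ^ (-β) * (γ * b ^ (-β)) ≤ (2:ℝ)^β * γ * (γ * c ^ (-β)) := by
      rw [Real.rpow_neg (by linarith), Real.rpow_neg (by linarith),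
          Real.rpow_neg (by linarith)]
      have hap : (0:ℝ) < a ^ β := by positivity
      have hbp : (0:ℝ) < b ^ β := by positivity
      have hcp : (0:ℝ) < c ^ β := by positivity
      have h5 : γ * γ * c ^ β ≤ γ * γ * (2 ^ β * a ^ β * b ^ β) :=
        mul_le_mul_of_nonneg_left hcpow (by positivity)
      calc γ * (a^β)⁻¹ * (γ * (b^β)⁻¹) = (γ * γ) / (a^β * b^β) := by
            field_simp
        _ ≤ ((2:ℝ)^β * γ * γ) / (c^β) := by
            rw [div_le_div_iff₀ (by positivity) hcp]
            calc γ * γ * c^β ≤ γ * γ * (2^β * a^β * b^β) := h5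
              _ = (2:ℝ)^β * γ * γ * (a^β * b^β) := by ring
        _ = (2:ℝ)^β * γ * (γ * (c^β)⁻¹) := by field_simp
    have hr : rK β γ (l+m) * rK β γ l = γ * a ^ (-β) * (γ * b ^ (-β)) := by
      rw [rK, rK, if_neg hlm, if_neg hl]
    have hr2 : rK β γ m = γ * c ^ (-β) := by rw [rK, if_neg hm]
    rw [hr, hr2]
    calc γ * a ^ (-β) * (γ * b ^ (-β)) ≤ (2:ℝ)^β * γ * (γ * c ^ (-β)) := hgoal
      _ ≤ max 1 ((2:ℝ)^β * γ) * (γ * c ^ (-β)) := by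
          apply mul_le_mul_of_nonneg_right hmax2 (by positivity)

theorem stmt_13 (β : ℝ) (hβ : 1 < β) (γ2 : ℕ → ℝ) (hγ2 : ∀ j, 0 < γ2 j ∧ γ2 j ≤ 1)
    (t : ℕ) (l m : Fin t → ℤ) :
    (∏ j : Fin t, rK β (γ2 j) (l j + m j)) * (∏ j : Fin t, rK β (γ2 j) (l j)) ≤
        (∏ j : Fin t, max 1 ((2 : ℝ) ^ β * γ2 j)) * ∏ j : Fin t, rK β (γ2 j) (m j) ∧
      (∏ j : Fin t, rK β (γ2 j) (l j + m j)) / (∏ j : Fin t, rK β (γ2 j) (m j)) ≤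
        (∏ j : Fin t, rK β (γ2 j) (l j))⁻¹ * ∏ j : Fin t, max 1 ((2 : ℝ) ^ β * γ2 j) := by
  have hA : ∀ j : Fin t, 0 < rK β (γ2 j) (l j + m j) :=
    fun j => rK_pos β _ (hγ2 j).1 _
  have hB : ∀ j : Fin t, 0 < rK β (γ2 j) (l j) := fun j => rK_pos β _ (hγ2 j).1 _
  have hD : ∀ j : Fin t, 0 < rK β (γ2 j) (m j) := fun j => rK_pos β _ (hγ2 j).1 _
  have h1 : (∏ j : Fin t, rK β (γ2 j) (l j + m j)) * (∏ j : Fin t, rK β (γ2 j) (l j)) ≤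
      (∏ j : Fin t, max 1 ((2 : ℝ) ^ β * γ2 j)) * ∏ j : Fin t, rK β (γ2 j) (m j) := by
    rw [← Finset.prod_mul_distrib, ← Finset.prod_mul_distrib]
    apply Finset.prod_le_prod
    · intro j _; exact mul_nonneg (hA j).le (hB j).le
    · intro j _
      exact key β hβ (γ2 j) (hγ2 j).1 (hγ2 j).2 (l j) (m j)
  refine ⟨h1, ?_⟩
  have hBp : (0:ℝ) < ∏ j : Fin t, rK β (γ2 j) (l j) :=
    Finset.prod_pos (fun j _ => hB j)
  have hDp : (0:ℝ) < ∏ j : Fin t, rK β (γ2 j) (m j) :=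
    Finset.prod_pos (fun j _ => hD j)
  rw [div_le_iff₀ hDp]
  calc (∏ j : Fin t, rK β (γ2 j) (l j + m j))
      = (∏ j : Fin t, rK β (γ2 j) (l j))⁻¹ *
        ((∏ j : Fin t, rK β (γ2 j) (l j + m j)) * (∏ j : Fin t, rK β (γ2 j) (l j))) := by
        field_simp
    _ ≤ (∏ j : Fin t, rK β (γ2 j) (l j))⁻¹ *
        ((∏ j : Fin t, max 1 ((2 : ℝ) ^ β * γ2 j)) * ∏ j : Fin t, rK β (γ2 j) (m j)) :=
        mul_le_mul_of_nonneg_left h1 (inv_nonneg.mpr hBp.le)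
    _ = (∏ j : Fin t, rK β (γ2 j) (l j))⁻¹ * (∏ j : Fin t, max 1 ((2 : ℝ) ^ β * γ2 j)) *
        ∏ j : Fin t, rK β (γ2 j) (m j) := by ring
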